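/- Consider scale-free percolation on ℤ^d with i.i.d. weights satisfying P(W > w) ≥ c w^{-(τ-1)} for all w ≥ 1 with τ > 1, and suppose α > d but γ = α(τ-1)/d ≤ 1. Then for any λ > 0, conditionally on W₀ = w with w > 0, the degree of the origin is almost surely infinite. -/

import Mathlib

open MeasureTheory ProbabilityTheory Real
open scoped ENNReal

/-- Euclidean norm on the lattice `ℤ^d`. -/
noncomputable def znorm (d : ℕ) (x : Fin d → ℤ) : ℝ :=
  Real.sqrt (∑ i, ((x i : ℝ)) ^ 2)

/-- A pair of finite sets of ordered pairs of vertices represents a valid collection of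
(distinct) edges: no loops, no repetitions (also up to swapping), and disjointness. -/
def OkPairs {V : Type*} [DecidableEq V] (S T : Finset (V × V)) : Prop :=
  (∀ p ∈ S ∪ T, p.1 ≠ p.2) ∧ (∀ p ∈ S ∪ T, p.swap ∉ S ∪ T) ∧ Disjoint S T

lemma znorm_zero_sub (d : ℕ) (x : Fin d → ℤ) : znorm d (0 - x) = znorm d x := by
  unfold znorm
  congr 1
  refine Finset.sum_congr rfl fun i _ => ?_
  have : ((0 : Fin d → ℤ) - x) i = -(x i) := by simp
  rw [this]
  push_cast
  ring

lemma abs_le_znorm (d : ℕ) (x : Fin d → ℤ) (i : Fin d) : |(x i : ℝ)| ≤ znorm d x := by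
  rw [← Real.sqrt_sq_eq_abs]
  apply Real.sqrt_le_sqrt
  exact Finset.single_le_sum (fun j _ => sq_nonneg ((x j : ℝ))) (Finset.mem_univ i)

lemma znorm_le (d : ℕ) (x : Fin d → ℤ) (M : ℝ) (hM : 0 ≤ M)
    (h : ∀ i, |(x i : ℝ)| ≤ M) : znorm d x ≤ Real.sqrt d * M := by
  unfold znorm
  rw [← Real.sqrt_sq hM, ← Real.sqrt_mul (by positivity)]
  apply Real.sqrt_le_sqrt
  calc ∑ i, ((x i : ℝ)) ^ 2 ≤ ∑ _i : Fin d, M ^ 2 := by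
        refine Finset.sum_le_sum fun i _ => ?_
        rw [← sq_abs]
        exact pow_le_pow_left₀ (abs_nonneg _) (h i) 2
    _ = d * M ^ 2 := by simp [mul_comm]

noncomputable def shell (d n : ℕ) : Finset (Fin d → ℤ) :=
  Fintype.piFinset fun _ => Finset.Icc ((2:ℤ)^n + 1) (2^(n+1))

lemma mem_shell {d n : ℕ} {y : Fin d → ℤ} (hy : y ∈ shell d n) (i : Fin d) :
    (2:ℤ)^n + 1 ≤ y i ∧ y i ≤ 2^(n+1) := by
  have := (Fintype.mem_piFinset.mp hy) i
  simpa [Finset.mem_Icc] using this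

lemma shell_card (d n : ℕ) : (shell d n).card = (2^n)^d := by
  rw [shell, Fintype.card_piFinset]
  simp only [Int.card_Icc, Finset.prod_const, Finset.card_univ, Fintype.card_fin]
  congr 1
  have h1 : (2:ℤ)^(n+1) + 1 - (2^n + 1) = 2^n := by rw [pow_succ]; ring
  rw [h1, show ((2:ℤ)^n) = ((2^n : ℕ) : ℤ) by push_cast; ring, Int.toNat_natCast]

lemma shell_ne_zero {d n : ℕ} (hd : 1 ≤ d) {y : Fin d → ℤ} (hy : y ∈ shell d n) :
    y ≠ 0 := by
  intro h
  have := (mem_shell hy ⟨0, hd⟩).1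
  rw [h] at this
  simp at this
  have : (0:ℤ) < 2^n := by positivity
  omega

lemma shell_disjoint {d : ℕ} (hd : 1 ≤ d) {n m : ℕ} (hnm : n < m) :
    Disjoint (shell d n) (shell d m) := by
  rw [Finset.disjoint_left]
  intro y hyn hym
  have h1 := (mem_shell hyn ⟨0, hd⟩).2
  have h2 := (mem_shell hym ⟨0, hd⟩).1
  have : (2:ℤ)^(n+1) ≤ 2^m := pow_le_pow_right₀ (by norm_num) hnm
  omega

lemma znorm_shell_lb {d n : ℕ} (hd : 1 ≤ d) {y : Fin d → ℤ} (hy : y ∈ shell d n) :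
    (2:ℝ)^n ≤ znorm d y := by
  have h := (mem_shell hy ⟨0, hd⟩).1
  have hpos : (0:ℤ) < y ⟨0, hd⟩ := by
    have : (0:ℤ) < 2^n := by positivity
    omega
  calc (2:ℝ)^n ≤ |(y ⟨0, hd⟩ : ℝ)| := by
        rw [abs_of_pos (by exact_mod_cast hpos)]
        have h' : ((2:ℤ)^n + 1 : ℝ) ≤ (y ⟨0, hd⟩ : ℝ) := by exact_mod_cast h
        push_cast at h'
        linarith
    _ ≤ znorm d y := abs_le_znorm d y _

lemma znorm_shell_ub {d n : ℕ} {y : Fin d → ℤ} (hy : y ∈ shell d n) :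
    znorm d y ≤ Real.sqrt d * 2^(n+1) := by
  apply znorm_le _ _ _ (by positivity)
  intro i
  obtain ⟨h1, h2⟩ := mem_shell hy i
  rw [abs_le]
  constructor
  · have : (0:ℤ) < 2^n + 1 := by positivity
    have hyi : (0:ℤ) ≤ y i := by omega
    have h2' : (0:ℝ) ≤ (y i : ℝ) := by exact_mod_cast hyi
    nlinarith [pow_pos (by norm_num : (0:ℝ) < 2) (n+1)]
  · exact_mod_cast h2

lemma prod_lintegral_of_iIndep {Ω : Type*} {ι : Type*} [MeasurableSpace Ω]
    {μ : Measure Ω} [IsProbabilityMeasure μ] {X : ι → Ω → ℝ≥0∞}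
    (hind : iIndepFun X μ) (hX : ∀ i, Measurable (X i))
    (s : Finset ι) :
    ∫⁻ ω, ∏ i ∈ s, X i ω ∂μ = ∏ i ∈ s, ∫⁻ ω, X i ω ∂μ := by
  classical
  induction s using Finset.induction_on with
  | empty => simp
  | @insert a s ha ih =>
    simp only [Finset.prod_insert ha]
    have hindep : IndepFun (X a) (fun ω => ∏ i ∈ s, X i ω) μ := by
      have := (hind.indepFun_finset_prod_of_notMem hX ha).symm
      simpa [Finset.prod_fn] using this
    have := lintegral_mul_eq_lintegral_mul_lintegral_of_indepFun''
      (hX a).aemeasurable (Finset.measurable_prod s fun i _ => hX i).aemeasurable hindep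
    rw [this, ih]

lemma factor_bound {Ω : Type*} [MeasureSpace Ω] [IsProbabilityMeasure (ℙ : Measure Ω)]
    (V : Ω → ℝ) (hV : Measurable V) (hVnn : ∀ ω, 0 ≤ V ω) (θ u q : ℝ) (hθ : 0 < θ)
    (hu : θ * u = 1) (hq0 : 0 ≤ q) (hq : ENNReal.ofReal q ≤ ℙ {ω | u < V ω}) :
    ∫⁻ ω, ENNReal.ofReal (Real.exp (-(θ * V ω))) ∂ℙ ≤
      ENNReal.ofReal (1 - (1 - Real.exp (-1)) * q) := by
  classical
  set s : Set Ω := {ω | u < V ω} with hs_def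
  have hs : MeasurableSet s := measurableSet_lt measurable_const hV
  set A : ℝ≥0∞ := ENNReal.ofReal (Real.exp (-1)) with hA_def
  have hA1 : A ≤ 1 := by
    rw [hA_def]
    refine ENNReal.ofReal_le_one.mpr ?_
    exact Real.exp_le_one_iff.mpr (by norm_num)
  have hpoint : ∀ ω, ENNReal.ofReal (Real.exp (-(θ * V ω))) ≤
      s.indicator (fun _ => A) ω + sᶜ.indicator (fun _ => (1:ℝ≥0∞)) ω := by
    intro ω
    by_cases hw : ω ∈ s
    · rw [Set.indicator_of_mem hw, Set.indicator_of_notMem (by simpa using hw), add_zero]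
      rw [hA_def]
      apply ENNReal.ofReal_le_ofReal
      apply Real.exp_le_exp.mpr
      have : u ≤ V ω := le_of_lt hw
      nlinarith [hθ.le]
    · rw [Set.indicator_of_notMem hw, Set.indicator_of_mem (by simpa using hw), zero_add]
      refine ENNReal.ofReal_le_one.mpr (Real.exp_le_one_iff.mpr ?_)
      have := hVnn ω
      nlinarith [hθ.le]
  calc ∫⁻ ω, ENNReal.ofReal (Real.exp (-(θ * V ω))) ∂ℙ
      ≤ ∫⁻ ω, (s.indicator (fun _ => A) ω + sᶜ.indicator (fun _ => (1:ℝ≥0∞)) ω) ∂ℙ :=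
        lintegral_mono hpoint
    _ = A * ℙ s + ℙ sᶜ := by
        rw [lintegral_add_left ((measurable_const).indicator hs)]
        rw [lintegral_indicator_const hs, lintegral_indicator_const hs.compl, one_mul]
    _ = A * ℙ s + (1 - ℙ s) := by rw [prob_compl_eq_one_sub hs]
    _ ≤ ENNReal.ofReal (1 - (1 - Real.exp (-1)) * q) := by
        set Q : ℝ≥0∞ := ENNReal.ofReal q with hQ_def
        have hp1 : ℙ s ≤ 1 := prob_le_one
        have hq1 : q ≤ 1 := ENNReal.ofReal_le_one.mp (hq.trans hp1)
        have hsplit : ℙ s = Q + (ℙ s - Q) := (add_tsub_cancel_of_le hq).symm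
        have h1 : A * ℙ s + (1 - ℙ s) ≤ A * Q + (1 - Q) := by
          have e1 : A * ℙ s = A * Q + A * (ℙ s - Q) := by
            conv_lhs => rw [hsplit, mul_add]
          calc A * ℙ s + (1 - ℙ s) = A * Q + (A * (ℙ s - Q) + (1 - ℙ s)) := by
                rw [e1, add_assoc]
            _ ≤ A * Q + ((ℙ s - Q) + (1 - ℙ s)) := by
                gcongr
                exact mul_le_of_le_one_left zero_le hA1
            _ = A * Q + (1 - Q) := by
                congr 1
                rw [add_comm]
                exact tsub_add_tsub_cancel hp1 hq
        refine h1.trans (le_of_eq ?_)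
        rw [hA_def, hQ_def, ← ENNReal.ofReal_mul (Real.exp_nonneg _)]
        have : (1:ℝ≥0∞) - ENNReal.ofReal q = ENNReal.ofReal (1 - q) := by
          rw [ENNReal.ofReal_sub _ hq0, ENNReal.ofReal_one]
        rw [this, ← ENNReal.ofReal_add (by positivity) (by linarith)]
        congr 1
        ring

lemma vertex_tail_lb (α τ c K z Z : ℝ) (hα : 0 ≤ α) (hτ : 1 < τ) (hc : 0 < c)
    (hK : 0 < K) (hz : 0 < z) (hzZ : z ≤ Z) :
    c * K^(τ-1) * Z^(-(α*(τ-1))) ≤ c * ((z ^ α) / K) ^ (-(τ-1)) := by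
  have hZ : 0 < Z := lt_of_lt_of_le hz hzZ
  have hzα : 0 < z ^ α := Real.rpow_pos_of_pos hz α
  have hZα : 0 < Z ^ α := Real.rpow_pos_of_pos hZ α
  have hu : (0:ℝ) < z ^ α / K := div_pos hzα hK
  have huU : z ^ α / K ≤ Z ^ α / K := by
    gcongr
  have h1 : (Z ^ α / K) ^ (-(τ-1)) ≤ (z ^ α / K) ^ (-(τ-1)) :=
    Real.rpow_le_rpow_of_nonpos hu huU (by linarith)
  have h2 : (Z ^ α / K) ^ (-(τ-1)) = K^(τ-1) * Z^(-(α*(τ-1))) := by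
    rw [Real.div_rpow hZα.le hK.le, ← Real.rpow_mul hZ.le, Real.rpow_neg hK.le,
      mul_neg, division_def, inv_inv, mul_comm]
  calc c * K^(τ-1) * Z^(-(α*(τ-1))) = c * ((Z ^ α / K) ^ (-(τ-1))) := by rw [h2]; ring
    _ ≤ c * ((z ^ α) / K) ^ (-(τ-1)) := mul_le_mul_of_nonneg_left h1 hc.le

lemma shell_count_bound (d n : ℕ) (hd : 1 ≤ d) (β : ℝ) (hβd : β ≤ (d:ℝ)) :
    (2 * Real.sqrt d)^(-β) ≤ (((2^n)^d : ℕ) : ℝ) * (Real.sqrt d * 2^(n+1))^(-β) := by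
  have hd0 : (0:ℝ) < d := by exact_mod_cast hd
  have hs : (0:ℝ) < Real.sqrt d := Real.sqrt_pos.mpr hd0
  have h2n : (0:ℝ) < (2:ℝ)^n := by positivity
  have h2n1 : (1:ℝ) ≤ (2:ℝ)^n := one_le_pow₀ (by norm_num)
  have hcard : (((2^n)^d : ℕ) : ℝ) = ((2:ℝ)^n)^(d:ℝ) := by
    push_cast
    rw [Real.rpow_natCast]
  have hZ : (Real.sqrt d * 2^(n+1) : ℝ)^(-β) = (Real.sqrt d)^(-β) * (((2:ℝ)^n)^(-β) * (2:ℝ)^(-β)) := by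
    rw [show ((2:ℝ)^(n+1)) = (2:ℝ)^n * 2 by rw [pow_succ],
      Real.mul_rpow hs.le (by positivity), Real.mul_rpow h2n.le (by norm_num)]
  rw [hcard, hZ]
  have key : (1:ℝ) ≤ ((2:ℝ)^n)^(d:ℝ) * ((2:ℝ)^n)^(-β) := by
    rw [← Real.rpow_add h2n]
    have h1 : ((2:ℝ)^n)^(0:ℝ) ≤ ((2:ℝ)^n)^((d:ℝ) + -β) :=
      Real.rpow_le_rpow_of_exponent_le h2n1 (by linarith)
    simpa using h1
  calc (2 * Real.sqrt d : ℝ)^(-β) = 2^(-β) * (Real.sqrt d)^(-β) := by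
        rw [Real.mul_rpow (by norm_num) hs.le]
    _ ≤ (((2:ℝ)^n)^(d:ℝ) * ((2:ℝ)^n)^(-β)) * ((2:ℝ)^(-β) * (Real.sqrt d)^(-β)) := by
        apply le_mul_of_one_le_left (by positivity) key
    _ = _ := by ring

theorem stmt_9 {Ω : Type*} [MeasureSpace Ω] [IsProbabilityMeasure (ℙ : Measure Ω)]
    (d : ℕ) (hd : 1 ≤ d) (α lam w τ c : ℝ) (hα : (d : ℝ) < α)
    (hτ : 1 < τ) (hc : 0 < c) (hγ : α * (τ - 1) / d ≤ 1)
    (hlam : 0 < lam) (hw : 0 < w)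
    (W : (Fin d → ℤ) → Ω → ℝ) (Ed : (Fin d → ℤ) → (Fin d → ℤ) → Ω → Bool)
    (hWmeas : ∀ x, Measurable (W x))
    (hEmeas : ∀ x y, Measurable (Ed x y))
    (hWnn : ∀ x ω, 0 ≤ W x ω)
    -- conditioning on W₀ = w:
    (hW0 : ∀ ω, W 0 ω = w)
    (hiid : iIndepFun W ℙ)
    (hident : ∀ x y : Fin d → ℤ, x ≠ 0 → y ≠ 0 → IdentDistrib (W x) (W y) ℙ ℙ)
    -- the weights satisfy P(W > u) ≥ c u^{-(τ-1)} for u ≥ 1: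
    (htail : ∀ x : Fin d → ℤ, x ≠ 0 → ∀ u : ℝ, 1 ≤ u →
      ENNReal.ofReal (c * u ^ (-(τ - 1))) ≤ ℙ {ω | u < W x ω})
    -- conditionally on the weights, edges are independent with
    -- probability p_{xy} = 1 - exp(-λ W_x W_y / |x-y|^α):
    (h_model : ∀ S T : Finset ((Fin d → ℤ) × (Fin d → ℤ)), OkPairs S T →
      ℙ {ω | (∀ p ∈ S, Ed p.1 p.2 ω = true) ∧ (∀ p ∈ T, Ed p.1 p.2 ω = false)} =
        ∫⁻ ω,
          (∏ p ∈ S, ENNReal.ofReal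
            (1 - Real.exp (-(lam * W p.1 ω * W p.2 ω / znorm d (p.1 - p.2) ^ α)))) *
          ∏ p ∈ T, ENNReal.ofReal
            (Real.exp (-(lam * W p.1 ω * W p.2 ω / znorm d (p.1 - p.2) ^ α))) ∂ℙ) :
    -- the degree of the origin is almost surely infinite:
    ∀ᵐ ω ∂ℙ, {y : Fin d → ℤ | y ≠ 0 ∧ Ed 0 y ω = true}.Infinite := by
  classical
  have hd0 : (0:ℝ) < d := by exact_mod_cast hd
  have hα1 : 1 ≤ α := le_trans (by exact_mod_cast hd) hα.le
  have hβ0 : 0 ≤ α * (τ - 1) := by nlinarith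
  have hβd : α * (τ - 1) ≤ (d:ℝ) := by
    have := mul_le_mul_of_nonneg_right hγ hd0.le
    rwa [div_mul_cancel₀ _ (ne_of_gt hd0), one_mul] at this
  have hlw : 0 < lam * w := mul_pos hlam hw
  have hE1 : Real.exp (-1) < 1 := Real.exp_lt_one_iff.mpr (by norm_num)
  -- the key claim: for every finite set F, a.s. some edge from 0 lands outside F
  have key : ∀ F : Finset (Fin d → ℤ),
      ℙ {ω | {y : Fin d → ℤ | y ≠ 0 ∧ Ed 0 y ω = true} ⊆ ↑F} = 0 := by
    intro F
    obtain ⟨n₁, hn₁⟩ : ∃ n : ℕ, lam * w < 2 ^ n := pow_unbounded_of_one_lt _ one_lt_two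
    set i0 : Fin d := ⟨0, hd⟩ with hi0
    set B : ℕ := F.sup fun y => (y i0).toNat with hB
    set n₀ : ℕ := max n₁ (B + 1) with hn₀
    set β : ℝ := α * (τ - 1) with hβ
    have hsd : (0:ℝ) < Real.sqrt d := Real.sqrt_pos.mpr hd0
    have hE0 : (0:ℝ) < 1 - Real.exp (-1) := by linarith
    set c₂ : ℝ := (1 - Real.exp (-1)) * (c * ((lam*w)^(τ-1) * (2*Real.sqrt d)^(-β))) with hc₂
    have hc₂pos : 0 < c₂ := by
      have h1 : (0:ℝ) < (lam*w)^(τ-1) := Real.rpow_pos_of_pos hlw _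
      have h2 : (0:ℝ) < (2*Real.sqrt d)^(-β) := Real.rpow_pos_of_pos (by linarith) _
      rw [hc₂]; positivity
    set q : (Fin d → ℤ) → ℝ := fun y => c * ((znorm d y ^ α) / (lam*w)) ^ (-(τ-1)) with hqdef
    set t : (Fin d → ℤ) → ℝ := fun y => (1 - Real.exp (-1)) * q y with htdef
    have main : ∀ N : ℕ, ℙ {ω | {y : Fin d → ℤ | y ≠ 0 ∧ Ed 0 y ω = true} ⊆ ↑F}
        ≤ ENNReal.ofReal (Real.exp (-((N:ℝ) * c₂))) := by
      intro N
      set G : Finset (Fin d → ℤ) := (Finset.range N).biUnion (fun k => shell d (n₀+k)) with hG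
      have hGmem : ∀ y ∈ G, ∃ k, k < N ∧ y ∈ shell d (n₀+k) := by
        intro y hy
        simpa [hG, Finset.mem_biUnion, Finset.mem_range] using hy
      have hGne : ∀ y ∈ G, y ≠ 0 := fun y hy => by
        obtain ⟨k, _, hk⟩ := hGmem y hy; exact shell_ne_zero hd hk
      have hzfacts : ∀ y ∈ G, 1 ≤ znorm d y ∧ lam * w ≤ znorm d y ^ α := by
        intro y hy
        obtain ⟨k, _, hk⟩ := hGmem y hy
        have hzlb : (2:ℝ)^(n₀+k) ≤ znorm d y := znorm_shell_lb hd hk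
        have h2a : (2:ℝ)^n₁ ≤ (2:ℝ)^(n₀+k) :=
          pow_le_pow_right₀ one_le_two (le_trans (le_max_left _ _) (Nat.le_add_right _ _))
        have hz1 : (1:ℝ) ≤ znorm d y :=
          le_trans (one_le_pow₀ one_le_two) hzlb
        refine ⟨hz1, ?_⟩
        have hmono : znorm d y ≤ znorm d y ^ α := by
          calc znorm d y = znorm d y ^ (1:ℝ) := (Real.rpow_one _).symm
            _ ≤ znorm d y ^ α := Real.rpow_le_rpow_of_exponent_le hz1 hα1
        linarith
      have hGF : ∀ y ∈ G, y ∉ F := by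
        intro y hy hyF
        obtain ⟨k, _, hk⟩ := hGmem y hy
        have h1 := (mem_shell hk i0).1
        have h2 : (y i0).toNat ≤ B := Finset.le_sup (f := fun y => (y i0).toNat) hyF
        have h3 : B + 1 ≤ n₀ := le_max_right _ _
        have h4 : n₀ < 2^n₀ := Nat.lt_two_pow_self
        have h5 : (2:ℤ)^n₀ ≤ 2^(n₀+k) := pow_le_pow_right₀ (by norm_num) (Nat.le_add_right _ _)
        have h6 : y i0 ≤ ((y i0).toNat : ℤ) := Int.self_le_toNat _
        have hA : ((y i0).toNat : ℤ) ≤ (B:ℤ) := by exact_mod_cast h2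
        have hBn : (B:ℤ) + 1 ≤ (n₀:ℤ) := by exact_mod_cast h3
        have hnp : (n₀:ℤ) < 2^n₀ := by exact_mod_cast h4
        linarith
      set T : Finset ((Fin d → ℤ) × (Fin d → ℤ)) := G.image (fun y => (0, y)) with hT
      have hOk : OkPairs (∅ : Finset ((Fin d → ℤ) × (Fin d → ℤ))) T := by
        refine ⟨?_, ?_, Finset.disjoint_empty_left _⟩
        · intro p hp
          rw [Finset.empty_union] at hp
          obtain ⟨y, hy, rfl⟩ := Finset.mem_image.mp hp
          exact fun h => hGne y hy h.symm
        · intro p hp hps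
          rw [Finset.empty_union] at hp hps
          obtain ⟨y, hy, rfl⟩ := Finset.mem_image.mp hp
          obtain ⟨z, hz, hzz⟩ := Finset.mem_image.mp hps
          have hy0 : y = 0 := by
            have := congrArg Prod.fst hzz
            simpa using this.symm
          exact hGne y hy hy0
      have hincl : {ω | {y : Fin d → ℤ | y ≠ 0 ∧ Ed 0 y ω = true} ⊆ ↑F} ⊆
          {ω | (∀ p ∈ (∅ : Finset ((Fin d → ℤ) × (Fin d → ℤ))), Ed p.1 p.2 ω = true) ∧
               (∀ p ∈ T, Ed p.1 p.2 ω = false)} := by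
        intro ω hω
        refine ⟨by simp, ?_⟩
        intro p hp
        obtain ⟨y, hy, rfl⟩ := Finset.mem_image.mp hp
        by_contra hne
        simp only [Bool.not_eq_false] at hne
        have : y ∈ (↑F : Set (Fin d → ℤ)) := hω ⟨hGne y hy, hne⟩
        exact hGF y hy (by exact_mod_cast this)
      have hmodel := h_model ∅ T hOk
      simp only [Finset.prod_empty, one_mul] at hmodel
      set θ : (Fin d → ℤ) → ℝ := fun y => lam * w / (znorm d y) ^ α with hθdef
      set X : (Fin d → ℤ) → Ω → ℝ≥0∞ :=
        fun y ω => ENNReal.ofReal (Real.exp (-(θ y * W y ω))) with hXdef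
      have hXmeas : ∀ y, Measurable (X y) := fun y =>
        (Real.measurable_exp.comp ((hWmeas y).const_mul (θ y)).neg).ennreal_ofReal
      have hXind : iIndepFun X ℙ := by
        have := hiid.comp (fun y (v : ℝ) => ENNReal.ofReal (Real.exp (-(θ y * v))))
          (fun y => (Real.measurable_exp.comp ((measurable_id.const_mul (θ y)).neg)).ennreal_ofReal)
        exact this
      have hinteq : ∀ ω, (∏ p ∈ T, ENNReal.ofReal
          (Real.exp (-(lam * W p.1 ω * W p.2 ω / znorm d (p.1 - p.2) ^ α))))
          = ∏ y ∈ G, X y ω := by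
        intro ω
        rw [hT, Finset.prod_image (fun a _ b _ h => ((Prod.mk.injEq _ _ _ _).mp h).2)]
        refine Finset.prod_congr rfl fun y hy => ?_
        rw [hXdef]
        have harg : lam * W ((0:Fin d → ℤ), y).1 ω * W ((0:Fin d → ℤ), y).2 ω /
            znorm d (((0:Fin d → ℤ), y).1 - ((0:Fin d → ℤ), y).2) ^ α = θ y * W y ω := by
          show lam * W 0 ω * W y ω / znorm d (0 - y) ^ α = θ y * W y ω
          rw [hW0 ω, znorm_zero_sub]
          simp only [hθdef]
          ring
        rw [harg]
      have hfact : ∫⁻ ω, ∏ y ∈ G, X y ω ∂ℙ = ∏ y ∈ G, ∫⁻ ω, X y ω ∂ℙ :=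
        prod_lintegral_of_iIndep hXind hXmeas G
      have hbound : ∀ y ∈ G, ∫⁻ ω, X y ω ∂ℙ ≤ ENNReal.ofReal (1 - t y) := by
        intro y hy
        obtain ⟨hz1, hzlaw⟩ := hzfacts y hy
        have hzpos : 0 < znorm d y := lt_of_lt_of_le one_pos hz1
        have hzα : 0 < znorm d y ^ α := Real.rpow_pos_of_pos hzpos α
        have hθpos : 0 < θ y := div_pos hlw hzα
        have hupos : 0 < znorm d y ^ α / (lam*w) := div_pos hzα hlw
        have huθ : θ y * (znorm d y ^ α / (lam*w)) = 1 := by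
          rw [hθdef]
          field_simp
        have h1u : 1 ≤ znorm d y ^ α / (lam*w) := (one_le_div hlw).mpr hzlaw
        have hq0 : 0 ≤ q y := le_of_lt (mul_pos hc (Real.rpow_pos_of_pos hupos _))
        have htl := htail y (hGne y hy) (znorm d y ^ α / (lam*w)) h1u
        exact factor_bound (W y) (hWmeas y) (hWnn y) (θ y) _ (q y) hθpos huθ hq0 htl
      have hsum : (N:ℝ) * c₂ ≤ ∑ y ∈ G, t y := by
        have hdisj : (↑(Finset.range N) : Set ℕ).PairwiseDisjoint (fun k => shell d (n₀+k)) := by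
          intro a _ b _ hab
          simp only [Function.onFun]
          rcases lt_or_gt_of_ne hab with h | h
          · exact shell_disjoint hd (Nat.add_lt_add_left h n₀)
          · exact (shell_disjoint hd (Nat.add_lt_add_left h n₀)).symm
        rw [hG, Finset.sum_biUnion hdisj]
        have hshell : ∀ k : ℕ, c₂ ≤ ∑ y ∈ shell d (n₀+k), t y := by
          intro k
          set n : ℕ := n₀ + k with hn
          have hper : ∀ y ∈ shell d n,
              (1 - Real.exp (-1)) * (c * (lam*w)^(τ-1) * (Real.sqrt d * 2^(n+1))^(-β)) ≤ t y := by
            intro y hy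
            have hzpos : 0 < znorm d y :=
              lt_of_lt_of_le (pow_pos (by norm_num) n) (znorm_shell_lb hd hy)
            have hv := vertex_tail_lb α τ c (lam*w) (znorm d y) (Real.sqrt d * 2^(n+1))
              (by linarith) hτ hc hlw hzpos (znorm_shell_ub hy)
            simp only [htdef, hqdef]
            exact mul_le_mul_of_nonneg_left hv hE0.le
          have hcard := Finset.card_nsmul_le_sum (shell d n) t _ hper
          rw [shell_card] at hcard
          have hcard' : (((2^n)^d : ℕ):ℝ) *
              ((1 - Real.exp (-1)) * (c * (lam*w)^(τ-1) * (Real.sqrt d * 2^(n+1))^(-β)))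
              ≤ ∑ y ∈ shell d n, t y := by
            simpa [nsmul_eq_mul] using hcard
          refine le_trans ?_ hcard'
          have hsc := shell_count_bound d n hd β hβd
          have hk0 : (0:ℝ) ≤ (1 - Real.exp (-1)) * (c * (lam*w)^(τ-1)) := by
            have : (0:ℝ) < (lam*w)^(τ-1) := Real.rpow_pos_of_pos hlw _
            positivity
          calc c₂ = ((1 - Real.exp (-1)) * (c * (lam*w)^(τ-1))) * (2*Real.sqrt d)^(-β) := by
                rw [hc₂]; ring
            _ ≤ ((1 - Real.exp (-1)) * (c * (lam*w)^(τ-1))) *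
                ((((2^n)^d : ℕ):ℝ) * (Real.sqrt d * 2^(n+1))^(-β)) :=
                mul_le_mul_of_nonneg_left hsc hk0
            _ = (((2^n)^d : ℕ):ℝ) *
                ((1 - Real.exp (-1)) * (c * (lam*w)^(τ-1) * (Real.sqrt d * 2^(n+1))^(-β))) := by
                ring
        calc (N:ℝ) * c₂ = ∑ _k ∈ Finset.range N, c₂ := by
              rw [Finset.sum_const, Finset.card_range, nsmul_eq_mul]
          _ ≤ ∑ k ∈ Finset.range N, ∑ y ∈ shell d (n₀+k), t y :=
              Finset.sum_le_sum fun k _ => hshell k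
      calc ℙ {ω | {y : Fin d → ℤ | y ≠ 0 ∧ Ed 0 y ω = true} ⊆ ↑F}
          ≤ ℙ {ω | (∀ p ∈ (∅ : Finset ((Fin d → ℤ) × (Fin d → ℤ))), Ed p.1 p.2 ω = true) ∧
               (∀ p ∈ T, Ed p.1 p.2 ω = false)} := measure_mono hincl
        _ = ∫⁻ ω, ∏ p ∈ T, ENNReal.ofReal
              (Real.exp (-(lam * W p.1 ω * W p.2 ω / znorm d (p.1 - p.2) ^ α))) ∂ℙ := hmodel
        _ = ∫⁻ ω, ∏ y ∈ G, X y ω ∂ℙ := lintegral_congr hinteq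
        _ = ∏ y ∈ G, ∫⁻ ω, X y ω ∂ℙ := hfact
        _ ≤ ∏ y ∈ G, ENNReal.ofReal (1 - t y) := Finset.prod_le_prod' hbound
        _ ≤ ∏ y ∈ G, ENNReal.ofReal (Real.exp (-(t y))) :=
            Finset.prod_le_prod' fun y _ =>
              ENNReal.ofReal_le_ofReal (by linarith [Real.add_one_le_exp (-(t y))])
        _ = ENNReal.ofReal (∏ y ∈ G, Real.exp (-(t y))) :=
            (ENNReal.ofReal_prod_of_nonneg fun y _ => Real.exp_nonneg _).symm
        _ = ENNReal.ofReal (Real.exp (-(∑ y ∈ G, t y))) := by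
            rw [← Real.exp_sum]
            congr 1
            rw [Finset.sum_neg_distrib]
        _ ≤ ENNReal.ofReal (Real.exp (-((N:ℝ) * c₂))) :=
            ENNReal.ofReal_le_ofReal (Real.exp_le_exp.mpr (by linarith))
    have htend : Filter.Tendsto (fun N : ℕ => ENNReal.ofReal (Real.exp (-((N:ℝ) * c₂))))
        Filter.atTop (nhds 0) := by
      rw [show (0:ℝ≥0∞) = ENNReal.ofReal 0 by simp]
      apply ENNReal.tendsto_ofReal
      apply Real.tendsto_exp_atBot.comp
      apply Filter.Tendsto.comp Filter.tendsto_neg_atTop_atBot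
      exact Filter.Tendsto.atTop_mul_const hc₂pos tendsto_natCast_atTop_atTop
    exact le_antisymm (ge_of_tendsto' htend main) zero_le
  rw [ae_iff]
  have hsub : {ω | ¬ ({y : Fin d → ℤ | y ≠ 0 ∧ Ed 0 y ω = true}).Infinite} ⊆
      ⋃ F : Finset (Fin d → ℤ), {ω | {y : Fin d → ℤ | y ≠ 0 ∧ Ed 0 y ω = true} ⊆ ↑F} := by
    intro ω hω
    simp only [Set.mem_setOf_eq, Set.not_infinite] at hω
    exact Set.mem_iUnion.mpr ⟨hω.toFinset, fun a ha => by simpa using (hω.mem_toFinset).mpr ha⟩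
  refine le_antisymm ?_ zero_le
  calc ℙ {ω | ¬ ({y : Fin d → ℤ | y ≠ 0 ∧ Ed 0 y ω = true}).Infinite}
      ≤ ℙ (⋃ F : Finset (Fin d → ℤ),
          {ω | {y : Fin d → ℤ | y ≠ 0 ∧ Ed 0 y ω = true} ⊆ ↑F}) := measure_mono hsub
    _ ≤ ∑' F : Finset (Fin d → ℤ),
          ℙ {ω | {y : Fin d → ℤ | y ≠ 0 ∧ Ed 0 y ω = true} ⊆ ↑F} := measure_iUnion_le _
    _ = 0 := by simp [key]
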